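/- Let w_{0,μ} be the longest element of the Young subgroup S_μ ≤ S_r for a composition μ ∈ Λ(n,r), and d_A^+ the longest element in the double coset S_{ro(A)} d_A S_{co(A)} indexed by A ∈ M_n(ℕ) with |A| = r. Then ℓ(d_A^+) - ℓ(w_{0,co(A)}) = Σ_{i ≥ s, j < t} a_{i,j} a_{s,t}. -/

import Mathlib

open Finset

/-- Coxeter length of a permutation of Fin r = number of inversions. -/
def permLen {r : ℕ} (w : Equiv.Perm (Fin r)) : ℕ :=
  (Finset.univ.filter (fun p : Fin r × Fin r => p.1 < p.2 ∧ w p.2 < w p.1)).card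

/-- Partial sum ν_0 + ... + ν_{i-1} of a composition. -/
def tsum' {n : ℕ} (ν : Fin n → ℕ) (i : ℕ) : ℕ :=
  ∑ u ∈ Finset.univ.filter (fun u : Fin n => (u : ℕ) < i), ν u

/-- x ∈ Fin r lies in the i-th block of the composition ν. -/
def inBlock {n r : ℕ} (ν : Fin n → ℕ) (i : Fin n) (x : Fin r) : Prop :=
  tsum' ν (i : ℕ) ≤ (x : ℕ) ∧ (x : ℕ) < tsum' ν ((i : ℕ) + 1)

instance {n r : ℕ} (ν : Fin n → ℕ) (i : Fin n) (x : Fin r) : Decidable (inBlock ν i x) :=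
  inferInstanceAs (Decidable (_ ∧ _))

/-- The Young subgroup S_μ: permutations preserving each block of μ. -/
def youngSubgroup {n : ℕ} (r : ℕ) (μ : Fin n → ℕ) : Set (Equiv.Perm (Fin r)) :=
  {w | ∀ (i : Fin n) (x : Fin r), inBlock μ i x → inBlock μ i (w x)}

/-- The double coset S_{ro(A)} d_A S_{co(A)} ⊆ S_r attached to A:
permutations w with |(block i of ro(A)) ∩ w(block j of co(A))| = a_{i,j}. -/
def doubleCoset {n : ℕ} (r : ℕ) (A : Fin n → Fin n → ℕ) : Set (Equiv.Perm (Fin r)) :=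
  {w | ∀ i j : Fin n,
    (Finset.univ.filter (fun x : Fin r =>
      inBlock (fun a => ∑ b, A a b) i (w x) ∧ inBlock (fun a => ∑ b, A b a) j x)).card
      = A i j}

lemma tsum'_mono {n : ℕ} (ν : Fin n → ℕ) {a b : ℕ} (h : a ≤ b) :
    tsum' ν a ≤ tsum' ν b := by
  apply Finset.sum_le_sum_of_subset
  intro u hu
  simp only [Finset.mem_filter, Finset.mem_univ, true_and] at *
  omega

lemma tsum'_top {n r : ℕ} (ν : Fin n → ℕ) (hν : ∑ u, ν u = r) : tsum' ν n = r := by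
  rw [tsum', Finset.filter_true_of_mem (fun u _ => u.isLt), hν]

lemma block_unique {n r : ℕ} {ν : Fin n → ℕ} {i j : Fin n} {x : Fin r}
    (hi : inBlock ν i x) (hj : inBlock ν j x) : i = j := by
  rcases lt_trichotomy i j with h | h | h
  · have h1 : (i : ℕ) + 1 ≤ (j : ℕ) := h
    have := tsum'_mono ν h1
    exact absurd (lt_of_lt_of_le hi.2 (le_trans this hj.1)) (lt_irrefl _)
  · exact h
  · have h1 : (j : ℕ) + 1 ≤ (i : ℕ) := h
    have := tsum'_mono ν h1
    exact absurd (lt_of_lt_of_le hj.2 (le_trans this hi.1)) (lt_irrefl _)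

lemma block_lt {n r : ℕ} {ν : Fin n → ℕ} {i j : Fin n} {x y : Fin r}
    (hi : inBlock ν i x) (hj : inBlock ν j y) (hij : i < j) : x < y := by
  have h1 : (i : ℕ) + 1 ≤ (j : ℕ) := hij
  have h2 := tsum'_mono ν h1
  have : (x : ℕ) < (y : ℕ) := by
    have := hi.2; have := hj.1; omega
  exact this

lemma exists_block {n r : ℕ} (ν : Fin n → ℕ) (hν : ∑ u, ν u = r) (x : Fin r) :
    ∃ i : Fin n, inBlock ν i x := by
  classical
  set S : Finset ℕ := (Finset.range (n+1)).filter (fun k => tsum' ν k ≤ (x : ℕ)) with hS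
  have h0 : 0 ∈ S := by
    rw [hS, Finset.mem_filter]
    refine ⟨by simp, ?_⟩
    simp [tsum']
  have hne : S.Nonempty := ⟨0, h0⟩
  set i := S.max' hne with hi
  have hiS : i ∈ S := S.max'_mem hne
  have hile : tsum' ν i ≤ (x : ℕ) := (Finset.mem_filter.mp hiS).2
  have hin1 : i < n + 1 := Finset.mem_range.mp (Finset.mem_filter.mp hiS).1
  have hxr : (x : ℕ) < r := x.isLt
  have hine : i ≠ n := by
    intro h
    rw [h] at hile
    rw [tsum'_top ν hν] at hile
    omega
  have hin : i < n := by omega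
  refine ⟨⟨i, hin⟩, hile, ?_⟩
  by_contra h
  push_neg at h
  have : i + 1 ∈ S := by
    simp only [hS, Finset.mem_filter, Finset.mem_range]
    exact ⟨by omega, h⟩
  have := S.le_max' _ this
  omega

lemma permLen_swap {r : ℕ} (w : Equiv.Perm (Fin r)) (x y : Fin r) (hxy : x < y)
    (hw : w x < w y) : permLen w + 1 ≤ permLen (w * Equiv.swap x y) := by
  classical
  set σ := Equiv.swap x y with hσ
  set Inv : Finset (Fin r × Fin r) :=
    Finset.univ.filter (fun p : Fin r × Fin r => p.1 < p.2 ∧ w p.2 < w p.1) with hInv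
  set Inv' : Finset (Fin r × Fin r) :=
    Finset.univ.filter (fun p : Fin r × Fin r => p.1 < p.2 ∧ (w * σ) p.2 < (w * σ) p.1) with hInv'
  have hxyInv : (x, y) ∉ Inv := by
    simp only [hInv, Finset.mem_filter, Finset.mem_univ, true_and]
    rintro ⟨-, h⟩
    exact absurd hw (not_lt.mpr h.le)
  have hcard : (insert (x, y) Inv).card = permLen w + 1 := by
    rw [Finset.card_insert_of_notMem hxyInv]; rfl
  rw [show permLen w + 1 = (insert (x,y) Inv).card from hcard.symm]
  show (insert (x,y) Inv).card ≤ permLen (w * σ)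
  have hI' : permLen (w * σ) = Inv'.card := rfl
  rw [hI']
  set F : Fin r × Fin r → Fin r × Fin r :=
    fun p => if σ p.1 < σ p.2 then (σ p.1, σ p.2) else p with hF
  apply Finset.card_le_card_of_injOn F
  · -- maps to
    intro p hp
    have hpmem : p.1 < p.2 ∧ (w p.2 < w p.1 ∨ p = (x, y)) := by
      rcases Finset.mem_insert.mp hp with h | h
      · exact ⟨h ▸ hxy, Or.inr h⟩
      · have := Finset.mem_filter.mp h
        exact ⟨this.2.1, Or.inl this.2.2⟩
    obtain ⟨hplt, hpinv⟩ := hpmem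
    simp only [Finset.mem_coe, hInv', Finset.mem_filter, Finset.mem_univ, true_and, hF]
    by_cases hb : σ p.1 < σ p.2
    · rw [if_pos hb]
      refine ⟨hb, ?_⟩
      simp only [Equiv.Perm.mul_apply, hσ, Equiv.swap_apply_self]
      rcases hpinv with h | h
      · exact h
      · exfalso
        rw [h] at hb
        simp only [hσ, Equiv.swap_apply_left, Equiv.swap_apply_right] at hb
        exact absurd (lt_trans hxy hb) (lt_irrefl _)
    · rw [if_neg hb]
      refine ⟨hplt, ?_⟩
      simp only [Equiv.Perm.mul_apply]
      push_neg at hb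
      have hne : σ p.1 ≠ σ p.2 := fun h => (ne_of_lt hplt) (σ.injective h)
      have hblt : σ p.2 < σ p.1 := lt_of_le_of_ne hb (Ne.symm hne)
      by_cases h1x : p.1 = x
      · by_cases h2y : p.2 = y
        · rw [h1x, h2y]
          simp only [hσ, Equiv.swap_apply_left, Equiv.swap_apply_right]
          exact hw
        · have h2x : p.2 ≠ x := (ne_of_gt (h1x ▸ hplt))
          have hσ2 : σ p.2 = p.2 := Equiv.swap_apply_of_ne_of_ne h2x h2y
          have hσ1 : σ p.1 = y := by rw [h1x]; exact Equiv.swap_apply_left x y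
          rw [hσ1, hσ2]
          rcases hpinv with h | h
          · exact lt_trans (h1x ▸ h) hw
          · exact absurd (congrArg Prod.snd h) h2y
      · by_cases h1y : p.1 = y
        · exfalso
          have h2x : p.2 ≠ x := ne_of_gt (lt_trans hxy (h1y ▸ hplt))
          have h2y : p.2 ≠ y := ne_of_gt (h1y ▸ hplt)
          have hσ2 : σ p.2 = p.2 := Equiv.swap_apply_of_ne_of_ne h2x h2y
          have hσ1 : σ p.1 = x := by rw [h1y]; exact Equiv.swap_apply_right x y
          rw [hσ1, hσ2] at hblt
          have h5 : y < p.2 := h1y ▸ hplt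
          exact absurd (lt_trans (lt_trans hxy h5) hblt) (lt_irrefl x)
        · have hσ1 : σ p.1 = p.1 := Equiv.swap_apply_of_ne_of_ne h1x h1y
          by_cases h2x : p.2 = x
          · exfalso
            have hσ2 : σ p.2 = y := by rw [h2x]; exact Equiv.swap_apply_left x y
            rw [hσ1, hσ2] at hblt
            exact absurd (lt_trans hxy (lt_trans hblt (h2x ▸ hplt))) (lt_irrefl _)
          · by_cases h2y : p.2 = y
            · have hσ2 : σ p.2 = x := by rw [h2y]; exact Equiv.swap_apply_right x y
              rw [hσ1, hσ2]
              rcases hpinv with h | h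
              · exact lt_trans hw (h2y ▸ h)
              · exact absurd (congrArg Prod.fst h) h1x
            · exfalso
              have hσ2 : σ p.2 = p.2 := Equiv.swap_apply_of_ne_of_ne h2x h2y
              rw [hσ1, hσ2] at hblt
              exact absurd (lt_trans hplt hblt) (lt_irrefl _)
  · -- injOn
    intro p hp q hq hpq
    have hplt : p.1 < p.2 := by
      rcases Finset.mem_insert.mp hp with h | h
      · exact h ▸ hxy
      · exact (Finset.mem_filter.mp h).2.1
    have hqlt : q.1 < q.2 := by
      rcases Finset.mem_insert.mp hq with h | h
      · exact h ▸ hxy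
      · exact (Finset.mem_filter.mp h).2.1
    simp only [hF] at hpq
    by_cases hbp : σ p.1 < σ p.2 <;> by_cases hbq : σ q.1 < σ q.2
    · rw [if_pos hbp, if_pos hbq] at hpq
      have h1 : σ p.1 = σ q.1 := congrArg Prod.fst hpq
      have h2 : σ p.2 = σ q.2 := congrArg Prod.snd hpq
      exact Prod.ext (σ.injective h1) (σ.injective h2)
    · rw [if_pos hbp, if_neg hbq] at hpq
      exfalso
      have h1 : q.1 = σ p.1 := (congrArg Prod.fst hpq).symm
      have h2 : q.2 = σ p.2 := (congrArg Prod.snd hpq).symm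
      rw [h1, h2] at hbq
      simp only [hσ, Equiv.swap_apply_self] at hbq
      exact hbq hplt
    · rw [if_neg hbp, if_pos hbq] at hpq
      exfalso
      have h1 : p.1 = σ q.1 := congrArg Prod.fst hpq
      have h2 : p.2 = σ q.2 := congrArg Prod.snd hpq
      rw [h1, h2] at hbp
      simp only [hσ, Equiv.swap_apply_self] at hbp
      exact hbp hqlt
    · rw [if_neg hbp, if_neg hbq] at hpq
      exact hpq

lemma count_lemma {n r : ℕ} (A : Fin n → Fin n → ℕ) (f g : Fin r → Fin n)
    (hcell : ∀ i j, (Finset.univ.filter (fun x : Fin r => f x = i ∧ g x = j)).card = A i j) :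
    (Finset.univ.filter (fun p : Fin r × Fin r =>
        g p.1 < g p.2 ∧ f p.2 ≤ f p.1)).card
      = ∑ i, ∑ j, ∑ s, ∑ t, if s ≤ i ∧ j < t then A i j * A s t else 0 := by
  classical
  set cell : Fin n → Fin n → Finset (Fin r) :=
    fun i j => Finset.univ.filter (fun x : Fin r => f x = i ∧ g x = j) with hcelldef
  set Q : Finset ((Fin n × Fin n) × (Fin n × Fin n)) :=
    Finset.univ.filter (fun q => q.2.1 ≤ q.1.1 ∧ q.1.2 < q.2.2) with hQ
  have hsplit : (Finset.univ.filter (fun p : Fin r × Fin r =>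
      g p.1 < g p.2 ∧ f p.2 ≤ f p.1))
      = Q.biUnion (fun q => (cell q.1.1 q.1.2) ×ˢ (cell q.2.1 q.2.2)) := by
    ext p
    simp only [Finset.mem_filter, Finset.mem_univ, true_and, Finset.mem_biUnion,
      Finset.mem_product, hQ, hcelldef]
    constructor
    · rintro ⟨h1, h2⟩
      exact ⟨((f p.1, g p.1), (f p.2, g p.2)), ⟨h2, h1⟩, ⟨rfl, rfl⟩, ⟨rfl, rfl⟩⟩
    · rintro ⟨q, ⟨hq1, hq2⟩, ⟨hp1f, hp1g⟩, ⟨hp2f, hp2g⟩⟩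
      rw [hp1f, hp1g, hp2f, hp2g]
      exact ⟨hq2, hq1⟩
  rw [hsplit, Finset.card_biUnion]
  · have hc : ∀ q ∈ Q, ((cell q.1.1 q.1.2) ×ˢ (cell q.2.1 q.2.2)).card
        = A q.1.1 q.1.2 * A q.2.1 q.2.2 := by
      intro q _
      rw [Finset.card_product, hcell, hcell]
    rw [Finset.sum_congr rfl hc]
    rw [hQ, Finset.sum_filter]
    simp only [Fintype.sum_prod_type]
  · intro q1 h1 q2 h2 hne
    simp only [Finset.disjoint_left]
    intro p hp1 hp2
    apply hne
    simp only [Finset.mem_product, hcelldef, Finset.mem_filter, Finset.mem_univ,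
      true_and] at hp1 hp2
    obtain ⟨⟨a1, b1⟩, ⟨a2, b2⟩⟩ := hp1
    obtain ⟨⟨a3, b3⟩, ⟨a4, b4⟩⟩ := hp2
    ext <;> simp_all

/-- ℓ(d_A⁺) - ℓ(w_{0,co(A)}) = Σ_{i ≥ s, j < t} a_{i,j} a_{s,t}, where d_A⁺ is a
longest element of the double coset of A and w_{0,co(A)} a longest element of the
Young subgroup S_{co(A)}. -/
theorem stmt17 (n r : ℕ) (A : Fin n → Fin n → ℕ) (hr : ∑ i, ∑ j, A i j = r)
    (dplus w0 : Equiv.Perm (Fin r))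
    (hd1 : dplus ∈ doubleCoset r A)
    (hd2 : ∀ w ∈ doubleCoset r A, permLen w ≤ permLen dplus)
    (hw1 : w0 ∈ youngSubgroup r (fun j => ∑ i, A i j))
    (hw2 : ∀ w ∈ youngSubgroup r (fun j => ∑ i, A i j), permLen w ≤ permLen w0) :
    (permLen dplus : ℤ) - permLen w0
      = ∑ i : Fin n, ∑ j : Fin n, ∑ s : Fin n, ∑ t : Fin n,
          if s ≤ i ∧ j < t then (A i j : ℤ) * A s t else 0 := by
  classical
  set ro : Fin n → ℕ := fun a => ∑ b, A a b with hro
  set co : Fin n → ℕ := fun a => ∑ b, A b a with hco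
  have hroSum : ∑ u, ro u = r := hr
  have hcoSum : ∑ u, co u = r := by
    rw [hco]
    rw [Finset.sum_comm]
    exact hr
  -- block functions
  choose rob hrobSpec using fun x : Fin r => exists_block ro hroSum x
  choose cob hcobSpec using fun x : Fin r => exists_block co hcoSum x
  have hrobIff : ∀ (i : Fin n) (x : Fin r), inBlock ro i x ↔ i = rob x :=
    fun i x => ⟨fun h => block_unique h (hrobSpec x), fun h => h ▸ hrobSpec x⟩
  have hcobIff : ∀ (j : Fin n) (x : Fin r), inBlock co j x ↔ j = cob x :=
    fun j x => ⟨fun h => block_unique h (hcobSpec x), fun h => h ▸ hcobSpec x⟩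
  -- cob is invariant under swapping two elements of the same co-block
  have hcobSwap : ∀ (x y z : Fin r), cob x = cob y →
      cob (Equiv.swap x y z) = cob z := by
    intro x y z hxy
    rcases eq_or_ne z x with rfl | hzx
    · rw [Equiv.swap_apply_left]; exact hxy.symm
    rcases eq_or_ne z y with rfl | hzy
    · rw [Equiv.swap_apply_right]; exact hxy
    · rw [Equiv.swap_apply_of_ne_of_ne hzx hzy]
  -- right multiplication by a same-co-block swap stays in the double coset
  have cosetSwapR : ∀ w ∈ doubleCoset r A, ∀ x y : Fin r, cob x = cob y →
      w * Equiv.swap x y ∈ doubleCoset r A := by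
    intro w hwmem x y hxy i j
    rw [← hwmem i j]
    set σ := Equiv.swap x y with hσd
    have himg : (Finset.univ.filter (fun z : Fin r =>
        inBlock ro i ((w * σ) z) ∧ inBlock co j z))
        = (Finset.univ.filter (fun u : Fin r =>
            inBlock ro i (w u) ∧ inBlock co j u)).image (fun u => σ u) := by
      ext z
      rw [Finset.mem_filter]
      simp only [Finset.mem_filter, Finset.mem_univ, true_and, Finset.mem_image,
        Equiv.Perm.mul_apply]
      constructor
      · rintro ⟨h1, h2⟩
        refine ⟨σ z, ⟨h1, ?_⟩, by simp [hσd, Equiv.swap_apply_self]⟩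
        rw [hcobIff] at h2 ⊢
        rw [hcobSwap x y z hxy, ← h2]
      · rintro ⟨u, ⟨h1, h2⟩, rfl⟩
        refine ⟨by simpa [hσd, Equiv.swap_apply_self] using h1, ?_⟩
        rw [hcobIff] at h2 ⊢
        rw [hcobSwap x y u hxy, ← h2]
    rw [himg, Finset.card_image_of_injective _ σ.injective]
  -- generic: block function invariant under same-block swaps
  have hfSwap : ∀ (f : Fin r → Fin n) (x y z : Fin r), f x = f y →
      f (Equiv.swap x y z) = f z := by
    intro f x y z hxy
    rcases eq_or_ne z x with rfl | hzx
    · rw [Equiv.swap_apply_left]; exact hxy.symm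
    rcases eq_or_ne z y with rfl | hzy
    · rw [Equiv.swap_apply_right]; exact hxy
    · rw [Equiv.swap_apply_of_ne_of_ne hzx hzy]
  -- left multiplication by a same-ro-block swap stays in the double coset
  have cosetSwapL : ∀ w ∈ doubleCoset r A, ∀ x y : Fin r,
      rob (w x) = rob (w y) →
      Equiv.swap (w x) (w y) * w ∈ doubleCoset r A := by
    intro w hwmem x y hxy i j
    rw [← hwmem i j]
    apply congrArg
    apply Finset.filter_congr
    intro z _
    simp only [Equiv.Perm.mul_apply]
    constructor <;> rintro ⟨h1, h2⟩ <;> refine ⟨?_, h2⟩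
    · rw [hrobIff] at h1 ⊢
      rwa [hfSwap rob (w x) (w y) (w z) hxy] at h1
    · rw [hrobIff] at h1 ⊢
      rwa [hfSwap rob (w x) (w y) (w z) hxy]
  -- right multiplication by a same-co-block swap stays in the Young subgroup
  have youngSwap : ∀ w ∈ youngSubgroup r co, ∀ x y : Fin r, cob x = cob y →
      w * Equiv.swap x y ∈ youngSubgroup r co := by
    intro w hw x y hxy i z hz
    show inBlock co i ((w * Equiv.swap x y) z)
    simp only [Equiv.Perm.mul_apply]
    apply hw
    rw [hcobIff] at hz ⊢
    rwa [hfSwap cob x y z hxy]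
  -- w0 preserves co-blocks
  have hcobw0 : ∀ z : Fin r, cob (w0 z) = cob z := by
    intro z
    exact ((hcobIff (cob z) (w0 z)).mp (hw1 (cob z) z (hcobSpec z))).symm
  -- characterization of non-inversions of dplus
  have hNId : ∀ p : Fin r × Fin r, (p.1 < p.2 ∧ dplus p.1 < dplus p.2) ↔
      (cob p.1 < cob p.2 ∧ rob (dplus p.1) < rob (dplus p.2)) := by
    intro p
    constructor
    · rintro ⟨h1, h2⟩
      have hcle : cob p.1 ≤ cob p.2 := by
        by_contra hcon
        push_neg at hcon
        exact absurd (block_lt (hcobSpec p.2) (hcobSpec p.1) hcon) (not_lt.mpr h1.le)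
      have hrle : rob (dplus p.1) ≤ rob (dplus p.2) := by
        by_contra hcon
        push_neg at hcon
        exact absurd (block_lt (hrobSpec _) (hrobSpec _) hcon) (not_lt.mpr h2.le)
      rcases eq_or_lt_of_le hcle with hceq | hclt
      · exfalso
        have hmem := cosetSwapR dplus hd1 p.1 p.2 hceq
        have hlen := permLen_swap dplus p.1 p.2 h1 h2
        have := hd2 _ hmem
        omega
      rcases eq_or_lt_of_le hrle with hreq | hrlt
      · exfalso
        have hmem := cosetSwapL dplus hd1 p.1 p.2 hreq
        have heq : Equiv.swap (dplus p.1) (dplus p.2) * dplus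
            = dplus * Equiv.swap p.1 p.2 :=
          (Equiv.mul_swap_eq_swap_mul dplus p.1 p.2).symm
        rw [heq] at hmem
        have hlen := permLen_swap dplus p.1 p.2 h1 h2
        have := hd2 _ hmem
        omega
      · exact ⟨hclt, hrlt⟩
    · rintro ⟨h1, h2⟩
      exact ⟨block_lt (hcobSpec p.1) (hcobSpec p.2) h1,
        block_lt (hrobSpec _) (hrobSpec _) h2⟩
  -- characterization of non-inversions of w0
  have hNIw : ∀ p : Fin r × Fin r, (p.1 < p.2 ∧ w0 p.1 < w0 p.2) ↔
      cob p.1 < cob p.2 := by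
    intro p
    constructor
    · rintro ⟨h1, h2⟩
      have hcle : cob p.1 ≤ cob p.2 := by
        by_contra hcon
        push_neg at hcon
        exact absurd (block_lt (hcobSpec p.2) (hcobSpec p.1) hcon) (not_lt.mpr h1.le)
      rcases eq_or_lt_of_le hcle with hceq | hclt
      · exfalso
        have hmem := youngSwap w0 hw1 p.1 p.2 hceq
        have hlen := permLen_swap w0 p.1 p.2 h1 h2
        have := hw2 _ hmem
        omega
      · exact hclt
    · intro h
      refine ⟨block_lt (hcobSpec p.1) (hcobSpec p.2) h, ?_⟩
      have h2 : cob (w0 p.1) < cob (w0 p.2) := by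
        rw [hcobw0, hcobw0]; exact h
      exact block_lt (hcobSpec _) (hcobSpec _) h2
  -- inversions + non-inversions = all increasing pairs
  have hT : ∀ w : Equiv.Perm (Fin r), permLen w +
      (Finset.univ.filter (fun p : Fin r × Fin r => p.1 < p.2 ∧ w p.1 < w p.2)).card
      = (Finset.univ.filter (fun p : Fin r × Fin r => p.1 < p.2)).card := by
    intro w
    rw [permLen, ← Finset.card_union_of_disjoint]
    · congr 1
      rw [← Finset.filter_or]
      apply Finset.filter_congr
      intro p _
      constructor
      · rintro (⟨h1, _⟩ | ⟨h1, _⟩) <;> exact h1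
      · intro h
        have hne : w p.1 ≠ w p.2 := fun hc => (ne_of_lt h) (w.injective hc)
        rcases lt_or_gt_of_ne hne with h' | h'
        · exact Or.inr ⟨h, h'⟩
        · exact Or.inl ⟨h, h'⟩
    · rw [Finset.disjoint_left]
      rintro p hp1 hp2
      simp only [Finset.mem_filter] at hp1 hp2
      exact absurd hp2.2.2 (not_lt.mpr hp1.2.2.le)
  -- cell cardinalities
  have hcell : ∀ i j, (Finset.univ.filter
      (fun x : Fin r => rob (dplus x) = i ∧ cob x = j)).card = A i j := by
    intro i j
    rw [← hd1 i j]
    apply congrArg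
    apply Finset.filter_congr
    intro x _
    rw [show inBlock (fun a => ∑ b, A a b) i (dplus x) ↔ i = rob (dplus x) from
      hrobIff i (dplus x)]
    rw [show inBlock (fun a => ∑ b, A b a) j x ↔ j = cob x from hcobIff j x]
    constructor <;> rintro ⟨a, b⟩ <;> exact ⟨a.symm, b.symm⟩
  have hX : (Finset.univ.filter (fun p : Fin r × Fin r =>
      cob p.1 < cob p.2 ∧ rob (dplus p.2) ≤ rob (dplus p.1))).card
      = ∑ i, ∑ j, ∑ s, ∑ t, if s ≤ i ∧ j < t then A i j * A s t else 0 :=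
    count_lemma A (fun x => rob (dplus x)) cob hcell
  -- splitting the count
  have hsplitC := Finset.card_filter_add_card_filter_not
    (s := Finset.univ.filter (fun p : Fin r × Fin r => cob p.1 < cob p.2))
    (p := fun p => rob (dplus p.1) < rob (dplus p.2))
  rw [Finset.filter_filter, Finset.filter_filter] at hsplitC
  have hneg : Finset.univ.filter (fun p : Fin r × Fin r =>
      cob p.1 < cob p.2 ∧ ¬ rob (dplus p.1) < rob (dplus p.2))
      = Finset.univ.filter (fun p : Fin r × Fin r =>
      cob p.1 < cob p.2 ∧ rob (dplus p.2) ≤ rob (dplus p.1)) := by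
    apply Finset.filter_congr
    intro p _
    rw [not_lt]
  rw [hneg] at hsplitC
  -- rewrite the two non-inversion counts
  have e1 := hT dplus
  have e2 := hT w0
  rw [show Finset.univ.filter (fun p : Fin r × Fin r =>
      p.1 < p.2 ∧ dplus p.1 < dplus p.2)
      = Finset.univ.filter (fun p : Fin r × Fin r =>
      cob p.1 < cob p.2 ∧ rob (dplus p.1) < rob (dplus p.2)) from by
    apply Finset.filter_congr
    intro p _
    exact hNId p] at e1
  rw [show Finset.univ.filter (fun p : Fin r × Fin r =>
      p.1 < p.2 ∧ w0 p.1 < w0 p.2)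
      = Finset.univ.filter (fun p : Fin r × Fin r => cob p.1 < cob p.2) from by
    apply Finset.filter_congr
    intro p _
    exact hNIw p] at e2
  -- final arithmetic
  have hcast : ((∑ i, ∑ j, ∑ s, ∑ t, if s ≤ i ∧ j < t then A i j * A s t else 0 : ℕ) : ℤ)
      = ∑ i : Fin n, ∑ j : Fin n, ∑ s : Fin n, ∑ t : Fin n,
          if s ≤ i ∧ j < t then (A i j : ℤ) * A s t else 0 := by
    push_cast
    rfl
  rw [← hcast, ← hX]
  omega
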